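/- With the non-simply laced Cartan data of the context, for every family n of nonnegative integers on J_k one has the telescoped form: L_k(n) = Σ_{j=1}^{k} [ N°_j · Λ° N°_j + Σ_{i=t_0(j−1)+1}^{t_0 j} ( N•_i · Λ• N•_i + 2 N°_j · A N•_i ) ], where N_{α,i} = Σ_{j=i}^{t_α k} n_{α,j} are the tail partial sums, N°_j = (N_{α,j})_{α∈Π_○} and N•_i = (N_{α,i})_{α∈Π_•}. -/

import Mathlib

open Finset

/-- `L_k(n) = Σ_{(α,i),(β,j)∈J_k} (Λ_{αβ}/t_α) min(t_α j, t_β i) n_{α,i} n_{β,j}`. -/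
def Lk (r : ℕ) (t : Fin r → ℕ) (Λ : Fin r → Fin r → ℤ) (k : ℕ)
    (n : Fin r → ℕ → ℕ) : ℚ :=
  ∑ α, ∑ β, ∑ i ∈ Icc 1 (t α * k), ∑ j ∈ Icc 1 (t β * k),
    (Λ α β : ℚ) / (t α : ℚ) * ((min (t α * j) (t β * i) : ℕ) : ℚ)
      * (n α i : ℚ) * (n β j : ℚ)

/-- Tail partial sums `N_{α,i} = Σ_{j=i}^{t_α k} n_{α,j}`. -/
def tailSum (r : ℕ) (t : Fin r → ℕ) (k : ℕ) (n : Fin r → ℕ → ℕ)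
    (α : Fin r) (i : ℕ) : ℚ :=
  ∑ j ∈ Icc i (t α * k), (n α j : ℚ)

lemma le_mul_iff_div (s c i : ℕ) (hs : 0 < s) (hc : 1 ≤ c) :
    c ≤ s * i ↔ (c - 1) / s + 1 ≤ i := by
  have h := Nat.div_lt_iff_lt_mul (x := c - 1) (y := i) hs
  rw [mul_comm s i]
  generalize (c - 1) / s = d at h ⊢
  omega

lemma indicator_tail (s c K : ℕ) (hs : 0 < s) (hc : 1 ≤ c) (f : ℕ → ℚ) :
    (∑ i ∈ Icc 1 K, if c ≤ s * i then f i else 0)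
      = ∑ i ∈ Icc ((c - 1) / s + 1) K, f i := by
  rw [← Finset.sum_filter]
  congr 1
  ext i
  simp only [mem_filter, mem_Icc]
  rw [le_mul_iff_div s c i hs hc]
  generalize (c - 1) / s = d
  omega

lemma min_expand (A B M : ℕ) (hA : A ≤ M) :
    ((min A B : ℕ) : ℚ) = ∑ m ∈ Icc 1 M, if m ≤ A ∧ m ≤ B then (1 : ℚ) else 0 := by
  rw [Finset.sum_boole]
  have : (Icc 1 M).filter (fun m => m ≤ A ∧ m ≤ B) = Icc 1 (min A B) := by
    ext m; simp only [mem_filter, mem_Icc]; omega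
  rw [this, Nat.card_Icc]
  norm_num

lemma ite_prod (P Q : Prop) [Decidable P] [Decidable Q] (x y : ℚ) :
    (if Q then x else 0) * (if P then y else 0) = if P ∧ Q then x * y else 0 := by
  split_ifs with h1 h2 h3 <;> first | tauto | ring

lemma block_sum (t K : ℕ) (g : ℕ → ℚ) :
    ∑ m ∈ Icc 1 (t * K), g m
      = ∑ j ∈ Icc 1 K, ∑ m ∈ Icc (t * (j - 1) + 1) (t * j), g m := by
  induction K with
  | zero => simp
  | succ K ih =>
    rw [Finset.sum_Icc_succ_top (by omega)]
    rw [← ih]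
    have h1 : Icc 1 (t * K) = Ioc 0 (t * K) := by ext m; simp only [mem_Icc, mem_Ioc]; omega
    have h2 : Icc 1 (t * (K + 1)) = Ioc 0 (t * (K + 1)) := by
      ext m; simp only [mem_Icc, mem_Ioc]; omega
    have h3 : Icc (t * (K + 1 - 1) + 1) (t * (K + 1)) = Ioc (t * K) (t * (K + 1)) := by
      ext m; simp only [mem_Icc, mem_Ioc, Nat.add_sub_cancel]; omega
    have h4 : t * K ≤ t * (K + 1) := Nat.mul_le_mul_left t (Nat.le_succ K)
    rw [h1, h2, h3]
    rw [← Finset.sum_Ioc_consecutive g (Nat.zero_le (t * K)) h4]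

lemma block_val (t j m : ℕ) (ht : 0 < t) (hj : 1 ≤ j)
    (hm : m ∈ Icc (t * (j - 1) + 1) (t * j)) : (m - 1) / t + 1 = j := by
  obtain ⟨j', rfl⟩ : ∃ j', j = j' + 1 := ⟨j - 1, by omega⟩
  simp only [Nat.add_sub_cancel, mem_Icc] at hm
  have e1 : j' * t = t * j' := by ring
  have e2 : (j' + 1) * t = t * j' + t := by ring
  have e3 : t * (j' + 1) = t * j' + t := by ring
  have : (m - 1) / t = j' := Nat.div_eq_of_lt_le (by omega) (by omega)
  omega

lemma collapse (t K : ℕ) (ht : 0 < t) (g : ℕ → ℚ) :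
    ∑ m ∈ Icc 1 (t * K), g ((m - 1) / t + 1) = t * ∑ i ∈ Icc 1 K, g i := by
  rw [block_sum t K, Finset.mul_sum]
  apply Finset.sum_congr rfl
  intro j hj
  simp only [mem_Icc] at hj
  rw [Finset.sum_congr rfl (fun m hm => by rw [block_val t j m ht hj.1 hm])]
  rw [Finset.sum_const, Nat.card_Icc]
  have hc : t * j + 1 - (t * (j - 1) + 1) = t := by
    obtain ⟨j', rfl⟩ : ∃ j', j = j' + 1 := ⟨j - 1, by omega⟩
    have e3 : t * (j' + 1) = t * j' + t := by ring
    simp only [Nat.add_sub_cancel]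
    omega
  rw [hc, nsmul_eq_mul]

lemma lam_symm {r : ℕ} (C : Fin r → Fin r → ℤ) (t : Fin r → ℕ) (δ : ℤ)
    (Λ : Fin r → Fin r → ℤ)
    (htpos : ∀ α, 0 < t α)
    (hsym : ∀ α β, (t β : ℤ) * C α β = (t α : ℤ) * C β α)
    (hδ : δ ≠ 0)
    (hCΛ : ∀ a b, ∑ ω, C a ω * Λ ω b = if a = b then δ else 0)
    (a b : Fin r) : (Λ a b : ℚ) / (t a : ℚ) = (Λ b a : ℚ) / (t b : ℚ) := by
  have htQ : ∀ c, (t c : ℚ) ≠ 0 := fun c =>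
    Nat.cast_ne_zero.mpr (htpos c).ne'
  have hCΛQ : ∀ a b, (∑ ω, (C a ω : ℚ) * (Λ ω b : ℚ)) = if a = b then (δ : ℚ) else 0 := by
    intro a b
    have h := congrArg (fun z : ℤ => (z : ℚ)) (hCΛ a b)
    push_cast at h
    simpa using h
  have hsymQ : ∀ ρ ω, (C ρ ω : ℚ) / (t ρ : ℚ) = (C ω ρ : ℚ) / (t ω : ℚ) := by
    intro ρ ω
    rw [div_eq_div_iff (htQ ρ) (htQ ω)]
    have h := congrArg (fun z : ℤ => (z : ℚ)) (hsym ρ ω)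
    push_cast at h
    linarith
  have e1 : (∑ ρ, ∑ ω, (Λ ρ a : ℚ) * ((C ρ ω : ℚ) / (t ρ : ℚ)) * (Λ ω b : ℚ))
      = (δ : ℚ) * ((Λ a b : ℚ) / (t a : ℚ)) := by
    rw [Finset.sum_comm]
    have inner : ∀ ω : Fin r, (∑ ρ, (Λ ρ a : ℚ) * ((C ρ ω : ℚ) / (t ρ : ℚ)) * (Λ ω b : ℚ))
        = if ω = a then (δ : ℚ) / (t ω : ℚ) * (Λ ω b : ℚ) else 0 := by
      intro ω
      have hterm : ∀ ρ : Fin r, (Λ ρ a : ℚ) * ((C ρ ω : ℚ) / (t ρ : ℚ)) * (Λ ω b : ℚ)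
          = ((C ω ρ : ℚ) * (Λ ρ a : ℚ)) / (t ω : ℚ) * (Λ ω b : ℚ) := by
        intro ρ; rw [hsymQ ρ ω]; ring
      rw [Finset.sum_congr rfl fun ρ _ => hterm ρ, ← Finset.sum_mul, ← Finset.sum_div,
        hCΛQ ω a]
      split_ifs <;> simp
    rw [Finset.sum_congr rfl fun ω _ => inner ω,
      Finset.sum_ite_eq' univ a (fun ω => (δ : ℚ) / (t ω : ℚ) * (Λ ω b : ℚ))]
    simp only [mem_univ, if_true]
    ring
  have e2 : (∑ ρ, ∑ ω, (Λ ρ a : ℚ) * ((C ρ ω : ℚ) / (t ρ : ℚ)) * (Λ ω b : ℚ))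
      = (δ : ℚ) * ((Λ b a : ℚ) / (t b : ℚ)) := by
    have inner : ∀ ρ : Fin r, (∑ ω, (Λ ρ a : ℚ) * ((C ρ ω : ℚ) / (t ρ : ℚ)) * (Λ ω b : ℚ))
        = if ρ = b then (Λ ρ a : ℚ) * ((δ : ℚ) / (t ρ : ℚ)) else 0 := by
      intro ρ
      have hterm : ∀ ω : Fin r, (Λ ρ a : ℚ) * ((C ρ ω : ℚ) / (t ρ : ℚ)) * (Λ ω b : ℚ)
          = (Λ ρ a : ℚ) * (((C ρ ω : ℚ) * (Λ ω b : ℚ)) / (t ρ : ℚ)) := by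
        intro ω; ring
      rw [Finset.sum_congr rfl fun ω _ => hterm ω, ← Finset.mul_sum, ← Finset.sum_div,
        hCΛQ ρ b]
      split_ifs <;> simp
    rw [Finset.sum_congr rfl fun ρ _ => inner ρ,
      Finset.sum_ite_eq' univ b (fun ρ => (Λ ρ a : ℚ) * ((δ : ℚ) / (t ρ : ℚ)))]
    simp only [mem_univ, if_true]
    ring
  have hδQ : (δ : ℚ) ≠ 0 := Int.cast_ne_zero.mpr hδ
  exact mul_left_cancel₀ hδQ (e1.symm.trans e2)

lemma stepA (r : ℕ) (t : Fin r → ℕ) (Λ : Fin r → Fin r → ℤ) (k : ℕ)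
    (n : Fin r → ℕ → ℕ) (htpos : ∀ α, 0 < t α) :
    Lk r t Λ k n = ∑ α, ∑ β, (Λ α β : ℚ) / (t α : ℚ) *
      ∑ m ∈ Icc 1 (t α * (t β * k)),
        tailSum r t k n α ((m - 1) / t β + 1) * tailSum r t k n β ((m - 1) / t α + 1) := by
  unfold Lk
  apply Finset.sum_congr rfl; intro α _
  apply Finset.sum_congr rfl; intro β _
  have key : (∑ i ∈ Icc 1 (t α * k), ∑ j ∈ Icc 1 (t β * k),
        ((min (t α * j) (t β * i) : ℕ) : ℚ) * (n α i : ℚ) * (n β j : ℚ))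
      = ∑ m ∈ Icc 1 (t α * (t β * k)),
        tailSum r t k n α ((m - 1) / t β + 1) * tailSum r t k n β ((m - 1) / t α + 1) := by
    have step1 : (∑ i ∈ Icc 1 (t α * k), ∑ j ∈ Icc 1 (t β * k),
          ((min (t α * j) (t β * i) : ℕ) : ℚ) * (n α i : ℚ) * (n β j : ℚ))
        = ∑ m ∈ Icc 1 (t α * (t β * k)), ∑ i ∈ Icc 1 (t α * k), ∑ j ∈ Icc 1 (t β * k),
            (if m ≤ t α * j ∧ m ≤ t β * i then (n α i : ℚ) * (n β j : ℚ) else 0) := by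
      have step0 : ∀ i, ∀ j ∈ Icc 1 (t β * k),
          ((min (t α * j) (t β * i) : ℕ) : ℚ) * (n α i : ℚ) * (n β j : ℚ)
            = ∑ m ∈ Icc 1 (t α * (t β * k)),
                (if m ≤ t α * j ∧ m ≤ t β * i then (n α i : ℚ) * (n β j : ℚ) else 0) := by
        intro i j hj
        simp only [mem_Icc] at hj
        have hA : t α * j ≤ t α * (t β * k) := Nat.mul_le_mul_left (t α) hj.2
        rw [min_expand (t α * j) (t β * i) (t α * (t β * k)) hA, Finset.sum_mul,
          Finset.sum_mul]
        apply Finset.sum_congr rfl; intro m _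
        split_ifs <;> ring
      rw [Finset.sum_congr rfl fun i _ => Finset.sum_congr rfl fun j hj => step0 i j hj]
      rw [Finset.sum_congr rfl fun i (_ : i ∈ Icc 1 (t α * k)) =>
        (Finset.sum_comm (s := Icc 1 (t β * k)) (t := Icc 1 (t α * (t β * k)))
          (f := fun j m => if m ≤ t α * j ∧ m ≤ t β * i then (n α i : ℚ) * (n β j : ℚ) else 0))]
      rw [Finset.sum_comm]
    rw [step1]
    apply Finset.sum_congr rfl; intro m hm
    simp only [mem_Icc] at hm
    have factor : (∑ i ∈ Icc 1 (t α * k), ∑ j ∈ Icc 1 (t β * k),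
          (if m ≤ t α * j ∧ m ≤ t β * i then (n α i : ℚ) * (n β j : ℚ) else 0))
        = (∑ i ∈ Icc 1 (t α * k), if m ≤ t β * i then (n α i : ℚ) else 0)
          * (∑ j ∈ Icc 1 (t β * k), if m ≤ t α * j then (n β j : ℚ) else 0) := by
      rw [Finset.sum_mul_sum]
      apply Finset.sum_congr rfl; intro i _
      apply Finset.sum_congr rfl; intro j _
      rw [ite_prod]
    rw [factor, indicator_tail (t β) m (t α * k) (htpos β) hm.1,
      indicator_tail (t α) m (t β * k) (htpos α) hm.1]
    rfl
  rw [← key, Finset.mul_sum]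
  apply Finset.sum_congr rfl; intro i _
  rw [Finset.mul_sum]
  apply Finset.sum_congr rfl; intro j _
  ring

lemma pull_swap {ι : Type*} (s u : Finset ι) (M : Finset ℕ) (c : ι → ι → ℚ)
    (f g : ι → ℕ → ℚ) :
    (∑ a ∈ s, ∑ b ∈ u, c a b * ∑ m ∈ M, f a m * g b m)
      = ∑ m ∈ M, ∑ a ∈ s, ∑ b ∈ u, f a m * c a b * g b m := by
  simp only [Finset.mul_sum]
  rw [Finset.sum_congr rfl fun a (_ : a ∈ s) => Finset.sum_comm (s := u) (t := M)
    (f := fun b m => c a b * (f a m * g b m))]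
  rw [Finset.sum_comm]
  exact Finset.sum_congr rfl fun m _ => Finset.sum_congr rfl fun a _ =>
    Finset.sum_congr rfl fun b _ => by ring

lemma fourway {ι : Type*} [Fintype ι] [DecidableEq ι] (P1 P0 : Finset ι)
    (hdisj : Disjoint P1 P0) (huniv : P1 ∪ P0 = univ) (G : ι → ι → ℚ) :
    (∑ a, ∑ b, G a b) = ((∑ a ∈ P1, ∑ b ∈ P1, G a b) + (∑ a ∈ P1, ∑ b ∈ P0, G a b))
      + ((∑ a ∈ P0, ∑ b ∈ P1, G a b) + (∑ a ∈ P0, ∑ b ∈ P0, G a b)) := by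
  have hsplit : ∀ G' : ι → ℚ, (∑ a, G' a) = ∑ a ∈ P1, G' a + ∑ a ∈ P0, G' a := by
    intro G'
    rw [← huniv, Finset.sum_union hdisj]
  rw [hsplit (fun a => ∑ b, G a b)]
  rw [Finset.sum_congr rfl fun a (_ : a ∈ P1) => hsplit (G a),
    Finset.sum_congr rfl fun a (_ : a ∈ P0) => hsplit (G a)]
  rw [Finset.sum_add_distrib, Finset.sum_add_distrib]

/-- Equation (4.25) of the paper: the telescoped form of `L_k(n)` for non-simply laced
Cartan data. -/
theorem Lk_telescoped
    (r : ℕ) (C : Fin r → Fin r → ℤ) (t : Fin r → ℕ)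
    (hdiag : ∀ α, C α α = 2)
    (hoff : ∀ α β, α ≠ β → C α β ≤ 0)
    (hzero : ∀ α β, C α β = 0 ↔ C β α = 0)
    (htpos : ∀ α, 0 < t α)
    (htone : ∃ α, t α = 1)
    (hsym : ∀ α β, (t β : ℤ) * C α β = (t α : ℤ) * C β α)
    (hposdef : ∀ v : Fin r → ℚ, v ≠ 0 →
      0 < ∑ α, ∑ β, v α * ((C α β : ℚ) / (t α : ℚ)) * v β)
    (hconn : (SimpleGraph.fromRel fun α β => C α β ≠ 0).Connected)
    (t0 : ℕ) (ht0 : 1 < t0) (htval : ∀ α, t α = 1 ∨ t α = t0) (ht0ex : ∃ α, t α = t0)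
    (δ : ℤ) (hδdet : δ = Matrix.det (Matrix.of fun a b => C a b)) (hδpos : 0 < δ)
    (Λ : Fin r → Fin r → ℤ)
    (hCΛ : ∀ a b, ∑ ω, C a ω * Λ ω b = if a = b then δ else 0)
    (hΛC : ∀ a b, ∑ ω, Λ a ω * C ω b = if a = b then δ else 0)
    (k : ℕ) (hk : 0 < k) (n : Fin r → ℕ → ℕ) :
    Lk r t Λ k n = ∑ j ∈ Icc 1 k,
      ((∑ a ∈ univ.filter (fun a => t a = 1), ∑ b ∈ univ.filter (fun b => t b = 1),
          tailSum r t k n a j * (Λ a b : ℚ) * tailSum r t k n b j)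
        + ∑ i ∈ Icc (t0 * (j - 1) + 1) (t0 * j),
            ((∑ a ∈ univ.filter (fun a => t a = t0), ∑ b ∈ univ.filter (fun b => t b = t0),
                tailSum r t k n a i * (Λ a b : ℚ) * tailSum r t k n b i)
              + 2 * ∑ a ∈ univ.filter (fun a => t a = 1),
                  ∑ b ∈ univ.filter (fun b => t b = t0),
                    tailSum r t k n a j * (Λ a b : ℚ) * tailSum r t k n b i)) := by
  have ht0pos : 0 < t0 := by omega
  have ht0Q : (t0 : ℚ) ≠ 0 := Nat.cast_ne_zero.mpr (by omega)
  set P1 := univ.filter (fun a : Fin r => t a = 1) with hP1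
  set P0 := univ.filter (fun a : Fin r => t a = t0) with hP0
  have hdisj : Disjoint P1 P0 := by
    rw [Finset.disjoint_left]
    intro a ha hb
    rw [hP1, Finset.mem_filter] at ha
    rw [hP0, Finset.mem_filter] at hb
    omega
  have huniv : P1 ∪ P0 = univ := by
    ext a
    simp only [hP1, hP0, mem_union, Finset.mem_filter, mem_univ, true_and, iff_true]
    exact htval a
  rw [stepA r t Λ k n htpos]
  set T := tailSum r t k n with hTdef
  rw [fourway P1 P0 hdisj huniv]
  -- the four blocks
  have h11 : (∑ a ∈ P1, ∑ b ∈ P1, (Λ a b : ℚ) / (t a : ℚ) *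
        ∑ m ∈ Icc 1 (t a * (t b * k)), T a ((m - 1) / t b + 1) * T b ((m - 1) / t a + 1))
      = ∑ j ∈ Icc 1 k, ∑ a ∈ P1, ∑ b ∈ P1, T a j * (Λ a b : ℚ) * T b j := by
    have e : ∀ a ∈ P1, ∀ b ∈ P1, ((Λ a b : ℚ) / (t a : ℚ) *
          ∑ m ∈ Icc 1 (t a * (t b * k)), T a ((m - 1) / t b + 1) * T b ((m - 1) / t a + 1))
        = (Λ a b : ℚ) * ∑ m ∈ Icc 1 k, T a m * T b m := by
      intro a ha b hb
      rw [hP1, Finset.mem_filter] at ha hb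
      rw [ha.2, hb.2, one_mul, one_mul, Nat.cast_one, div_one]
      congr 1
      apply Finset.sum_congr rfl
      intro m hm
      simp only [mem_Icc] at hm
      have hx : (m - 1) / 1 + 1 = m := by omega
      rw [hx]
    rw [Finset.sum_congr rfl fun a ha => Finset.sum_congr rfl fun b hb => e a ha b hb]
    rw [pull_swap P1 P1 (Icc 1 k) (fun a b => (Λ a b : ℚ))
      (fun a m => T a m) (fun b m => T b m)]
  have e10 : ∀ a ∈ P1, ∀ b ∈ P0, ((Λ a b : ℚ) / (t a : ℚ) *
        ∑ m ∈ Icc 1 (t a * (t b * k)), T a ((m - 1) / t b + 1) * T b ((m - 1) / t a + 1))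
      = (Λ a b : ℚ) * ∑ m ∈ Icc 1 (t0 * k), T a ((m - 1) / t0 + 1) * T b m := by
    intro a ha b hb
    rw [hP1, Finset.mem_filter] at ha
    rw [hP0, Finset.mem_filter] at hb
    rw [ha.2, hb.2, one_mul, Nat.cast_one, div_one]
    congr 1
    apply Finset.sum_congr rfl
    intro m hm
    simp only [mem_Icc] at hm
    have hx : (m - 1) / 1 + 1 = m := by omega
    rw [hx]
  have h10 : (∑ a ∈ P1, ∑ b ∈ P0, (Λ a b : ℚ) / (t a : ℚ) *
        ∑ m ∈ Icc 1 (t a * (t b * k)), T a ((m - 1) / t b + 1) * T b ((m - 1) / t a + 1))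
      = ∑ j ∈ Icc 1 k, ∑ i ∈ Icc (t0 * (j - 1) + 1) (t0 * j),
          ∑ a ∈ P1, ∑ b ∈ P0, T a j * (Λ a b : ℚ) * T b i := by
    rw [Finset.sum_congr rfl fun a ha => Finset.sum_congr rfl fun b hb => e10 a ha b hb]
    rw [pull_swap P1 P0 (Icc 1 (t0 * k)) (fun a b => (Λ a b : ℚ))
      (fun a m => T a ((m - 1) / t0 + 1)) (fun b m => T b m)]
    rw [block_sum t0 k]
    apply Finset.sum_congr rfl; intro j hj
    apply Finset.sum_congr rfl; intro m hm
    rw [block_val t0 j m ht0pos (mem_Icc.mp hj).1 hm]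
  have h01 : (∑ a ∈ P0, ∑ b ∈ P1, (Λ a b : ℚ) / (t a : ℚ) *
        ∑ m ∈ Icc 1 (t a * (t b * k)), T a ((m - 1) / t b + 1) * T b ((m - 1) / t a + 1))
      = (∑ a ∈ P1, ∑ b ∈ P0, (Λ a b : ℚ) / (t a : ℚ) *
        ∑ m ∈ Icc 1 (t a * (t b * k)), T a ((m - 1) / t b + 1) * T b ((m - 1) / t a + 1)) := by
    have e : ∀ a ∈ P0, ∀ b ∈ P1, ((Λ a b : ℚ) / (t a : ℚ) *
          ∑ m ∈ Icc 1 (t a * (t b * k)), T a ((m - 1) / t b + 1) * T b ((m - 1) / t a + 1))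
        = (Λ b a : ℚ) * ∑ m ∈ Icc 1 (t0 * k), T a m * T b ((m - 1) / t0 + 1) := by
      intro a ha b hb
      rw [hP0, Finset.mem_filter] at ha
      rw [hP1, Finset.mem_filter] at hb
      have hc := lam_symm C t δ Λ htpos hsym hδpos.ne' hCΛ a b
      rw [ha.2, hb.2] at hc ⊢
      rw [Nat.cast_one, div_one] at hc
      rw [hc, one_mul]
      congr 1
      apply Finset.sum_congr rfl
      intro m hm
      simp only [mem_Icc] at hm
      have hx : (m - 1) / 1 + 1 = m := by omega
      rw [hx]
    rw [Finset.sum_congr rfl fun a ha => Finset.sum_congr rfl fun b hb => e a ha b hb]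
    rw [Finset.sum_congr rfl fun a ha => Finset.sum_congr rfl fun b hb => e10 a ha b hb]
    conv_lhs => rw [Finset.sum_comm]
    apply Finset.sum_congr rfl; intro x _
    apply Finset.sum_congr rfl; intro y _
    congr 1
    apply Finset.sum_congr rfl; intro m _
    ring
  have h00 : (∑ a ∈ P0, ∑ b ∈ P0, (Λ a b : ℚ) / (t a : ℚ) *
        ∑ m ∈ Icc 1 (t a * (t b * k)), T a ((m - 1) / t b + 1) * T b ((m - 1) / t a + 1))
      = ∑ j ∈ Icc 1 k, ∑ i ∈ Icc (t0 * (j - 1) + 1) (t0 * j),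
          ∑ a ∈ P0, ∑ b ∈ P0, T a i * (Λ a b : ℚ) * T b i := by
    have e : ∀ a ∈ P0, ∀ b ∈ P0, ((Λ a b : ℚ) / (t a : ℚ) *
          ∑ m ∈ Icc 1 (t a * (t b * k)), T a ((m - 1) / t b + 1) * T b ((m - 1) / t a + 1))
        = (Λ a b : ℚ) * ∑ i ∈ Icc 1 (t0 * k), T a i * T b i := by
      intro a ha b hb
      rw [hP0, Finset.mem_filter] at ha hb
      rw [ha.2, hb.2]
      have hcoll := collapse t0 (t0 * k) ht0pos (fun i => T a i * T b i)
      rw [hcoll]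
      field_simp
    rw [Finset.sum_congr rfl fun a ha => Finset.sum_congr rfl fun b hb => e a ha b hb]
    rw [pull_swap P0 P0 (Icc 1 (t0 * k)) (fun a b => (Λ a b : ℚ))
      (fun a i => T a i) (fun b i => T b i)]
    rw [block_sum t0 k]
  rw [h11, h01, h10, h00]
  simp only [Finset.sum_add_distrib]
  have hD : (∑ j ∈ Icc 1 k, ∑ i ∈ Icc (t0 * (j - 1) + 1) (t0 * j),
        2 * ∑ a ∈ P1, ∑ b ∈ P0, T a j * (Λ a b : ℚ) * T b i)
      = 2 * ∑ j ∈ Icc 1 k, ∑ i ∈ Icc (t0 * (j - 1) + 1) (t0 * j),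
          ∑ a ∈ P1, ∑ b ∈ P0, T a j * (Λ a b : ℚ) * T b i := by
    rw [Finset.mul_sum]
    exact Finset.sum_congr rfl fun j _ => by rw [Finset.mul_sum]
  rw [hD]
  ring
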